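/- Assume conditions (B) and (C) hold, that L_{i+1} = [L_i, L_1] for all i > 0, and that there exists a Lie subalgebra S of L that is simple as a Lie algebra, is graded in the sense that S = ⊕_i (S ∩ L_i), and satisfies S ∩ L_i = L_i for all i ≠ 0, with L_1 ≠ 0. Then the annihilator of L_1 in L_0 is zero: the only x ∈ L_0 with [x, L_1] = 0 is x = 0. (Lemma 2.14.) -/

import Mathlib

/- Graded Lie algebra setting: `F` a field of characteristic 3, `A` a
finite-dimensional Lie algebra over `F`, with a `ℤ`-grading `L : ℤ → Submodule F A`. -/

namespace GradedLie

variable {F A : Type*} [Field F] [CharP F 3] [LieRing A] [LieAlgebra F A]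

/-- The linear span of all brackets `⁅u, v⁆` with `u ∈ U`, `v ∈ V`. -/
def bSpan (U V : Submodule F A) : Submodule F A :=
  Submodule.span F {z | ∃ u ∈ U, ∃ v ∈ V, z = ⁅u, v⁆}

/-- `M` is an irreducible `L0`-module under the adjoint action:
`M ≠ 0` and the only `L0`-submodules of `M` are `0` and `M`. -/
def IsIrred (L0 M : Submodule F A) : Prop :=
  M ≠ ⊥ ∧ ∀ V ≤ M, bSpan L0 V ≤ V → V = ⊥ ∨ V = M

lemma lie_mem_bSpan {U V : Submodule F A} {u v : A} (hu : u ∈ U) (hv : v ∈ V) :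
    ⁅u, v⁆ ∈ bSpan U V :=
  Submodule.subset_span ⟨u, hu, v, hv, rfl⟩

lemma bSpan_le {U V W : Submodule F A} (h : ∀ u ∈ U, ∀ v ∈ V, ⁅u, v⁆ ∈ W) :
    bSpan U V ≤ W := by
  rw [bSpan, Submodule.span_le]
  rintro z ⟨u, hu, v, hv, rfl⟩
  exact h u hu v hv

lemma bSpan_induction {U V : Submodule F A} {C : A → Prop} {x : A} (hx : x ∈ bSpan U V)
    (mem : ∀ u ∈ U, ∀ v ∈ V, C ⁅u, v⁆) (zero : C 0)
    (add : ∀ a b, C a → C b → C (a + b))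
    (smul : ∀ (c : F) (a : A), C a → C (c • a)) : C x := by
  refine Submodule.span_induction ?_ zero (fun a b _ _ ha hb => add a b ha hb)
    (fun c a _ ha => smul c a ha) hx
  rintro z ⟨u, hu, v, hv, rfl⟩
  exact mem u hu v hv

/-- Lemma 2.14: under (B), (C), generation of the positive part by `L 1`, and the
existence of a simple graded subalgebra `S` with `S ∩ L i = L i` for `i ≠ 0` and
`L 1 ≠ 0`, the annihilator of `L 1` in `L 0` is zero. -/
theorem lemma_2_14
    [FiniteDimensional F A]
    (L : ℤ → Submodule F A)
    (hdecomp : DirectSum.IsInternal L)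
    (hgrade : ∀ i j : ℤ, ∀ x ∈ L i, ∀ y ∈ L j, ⁅x, y⁆ ∈ L (i + j))
    (q r : ℤ) (hq : 1 ≤ q) (hr : 1 ≤ r)
    (hbound : ∀ i : ℤ, i < -q ∨ r < i → L i = ⊥)
    (hbot : L (-q) ≠ ⊥)
    (hB : IsIrred (L 0) (L (-1)))
    (hC : ∀ j : ℤ, 0 ≤ j → ∀ x ∈ L j, (∀ y ∈ L (-1), ⁅x, y⁆ = 0) → x = 0)
    (hgen : ∀ i : ℤ, 0 < i → L (i + 1) = bSpan (L i) (L 1))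
    (S : LieSubalgebra F A)
    (hSsimple : LieAlgebra.IsSimple F S)
    (hSgraded : S.toSubmodule = ⨆ i : ℤ, S.toSubmodule ⊓ L i)
    (hSi : ∀ i : ℤ, i ≠ 0 → S.toSubmodule ⊓ L i = L i)
    (hL1 : L 1 ≠ ⊥) :
    ∀ x ∈ L 0, (∀ y ∈ L 1, ⁅x, y⁆ = 0) → x = 0 := by
  classical
  -- the annihilator of `L 1` in `L 0`, as a submodule
  set Ann : Submodule F A :=
    { carrier := {x | x ∈ L 0 ∧ ∀ y ∈ L 1, ⁅x, y⁆ = 0}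
      add_mem' := by
        rintro a b ⟨ha0, ha1⟩ ⟨hb0, hb1⟩
        exact ⟨(L 0).add_mem ha0 hb0,
          fun y hy => by rw [add_lie, ha1 y hy, hb1 y hy, add_zero]⟩
      zero_mem' := ⟨(L 0).zero_mem, fun y _ => zero_lie y⟩
      smul_mem' := by
        rintro c a ⟨ha0, ha1⟩
        exact ⟨(L 0).smul_mem c ha0,
          fun y hy => by rw [smul_lie, ha1 y hy, smul_zero]⟩ } with hAnnDef
  have hAnnMem : ∀ a : A, a ∈ Ann ↔ a ∈ L 0 ∧ ∀ y ∈ L 1, ⁅a, y⁆ = 0 := fun a => Iff.rfl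
  have hAnn0 : ∀ a ∈ Ann, a ∈ L 0 := fun a ha => ((hAnnMem a).mp ha).1
  have hAnn1 : ∀ a ∈ Ann, ∀ u ∈ L 1, ⁅a, u⁆ = 0 := fun a ha => ((hAnnMem a).mp ha).2
  -- `Ann` is `L 0`-invariant
  have step1 : ∀ a ∈ Ann, ∀ z ∈ L 0, ⁅a, z⁆ ∈ Ann := by
    intro a ha z hz
    refine (hAnnMem _).mpr ⟨by simpa using hgrade 0 0 a (hAnn0 a ha) z hz, fun u hu => ?_⟩
    have hzu : ⁅z, u⁆ ∈ L 1 := by simpa using hgrade 0 1 z hz u hu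
    rw [lie_lie, hAnn1 a ha u hu, lie_zero, sub_zero, hAnn1 a ha _ hzu]
  have step1' : ∀ z ∈ L 0, ∀ a ∈ Ann, ⁅z, a⁆ ∈ Ann := by
    intro z hz a ha
    have : ⁅z, a⁆ = -⁅a, z⁆ := (neg_eq_iff_eq_neg.mp (lie_skew a z)).symm ▸ rfl
    rw [← lie_skew]
    exact Ann.neg_mem (step1 a ha z hz)
  -- `W = [Ann, L₋₁]` is an `L 0`-submodule of `L₋₁`
  set W : Submodule F A := bSpan Ann (L (-1)) with hWdef
  have hWle : W ≤ L (-1) := bSpan_le fun u hu v hv => by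
    simpa using hgrade 0 (-1) u (hAnn0 u hu) v hv
  have hWcl : bSpan (L 0) W ≤ W := by
    refine bSpan_le fun z hz w hw => ?_
    refine bSpan_induction (C := fun w => ⁅z, w⁆ ∈ W) hw (fun a ha y hy => ?_)
      (by show ⁅z, (0 : A)⁆ ∈ W; rw [lie_zero]; exact W.zero_mem)
      (fun a b hca hcb => by show ⁅z, a + b⁆ ∈ W; rw [lie_add]; exact W.add_mem hca hcb)
      (fun c a hca => by show ⁅z, c • a⁆ ∈ W; rw [lie_smul]; exact W.smul_mem c hca)
    show ⁅z, ⁅a, y⁆⁆ ∈ W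
    rw [leibniz_lie]
    exact W.add_mem (lie_mem_bSpan (step1' z hz a ha) hy)
      (lie_mem_bSpan ha (by simpa using hgrade 0 (-1) z hz y hy))
  rcases hB.2 W hWle hWcl with hW | hW
  · -- case `[Ann, L₋₁] = 0` : done by transitivity
    intro x hx0 hx1
    refine hC 0 le_rfl x hx0 fun y hy => ?_
    have hxy : ⁅x, y⁆ ∈ W := lie_mem_bSpan ((hAnnMem x).mpr ⟨hx0, hx1⟩) hy
    rw [hW] at hxy
    simpa using hxy
  · -- case `[Ann, L₋₁] = L₋₁` : contradiction with simplicity of `S`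
    exfalso
    -- `[L₋₁, L 1] ⊆ Ann`
    have hTAnn : ∀ y ∈ L (-1), ∀ u ∈ L 1, ⁅y, u⁆ ∈ Ann := by
      intro y hy
      rw [← hW] at hy
      refine bSpan_induction (C := fun y => ∀ u ∈ L 1, ⁅y, u⁆ ∈ Ann) hy
        (fun a ha y' hy' => ?_)
        (fun u _ => by rw [zero_lie]; exact Ann.zero_mem)
        (fun a b hca hcb u hu => by rw [add_lie]; exact Ann.add_mem (hca u hu) (hcb u hu))
        (fun c a hca u hu => by rw [smul_lie]; exact Ann.smul_mem c (hca u hu))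
      intro u hu
      rw [lie_lie, hAnn1 a ha u hu, lie_zero, sub_zero]
      exact step1 a ha _ (by simpa using hgrade (-1) 1 y' hy' u hu)
    -- `[L₋₁, L 2] = 0`, hence `L 2 = 0`, hence `L j = 0` for `j ≥ 2`
    have h2 : ∀ w ∈ L 2, ∀ y ∈ L (-1), ⁅y, w⁆ = 0 := by
      intro w hw
      have hL2span : L 2 = bSpan (L 1) (L 1) := by
        have := hgen 1 one_pos; norm_num at this; exact this
      rw [hL2span] at hw
      refine bSpan_induction (C := fun w => ∀ y ∈ L (-1), ⁅y, w⁆ = 0) hw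
        (fun u hu v hv => ?_)
        (fun y _ => lie_zero y)
        (fun a b hca hcb y hy => by rw [lie_add, hca y hy, hcb y hy, add_zero])
        (fun c a hca y hy => by rw [lie_smul, hca y hy, smul_zero])
      intro y hy
      rw [leibniz_lie, hAnn1 _ (hTAnn y hy u hu) v hv, zero_add, ← lie_skew,
        hAnn1 _ (hTAnn y hy v hv) u hu, neg_zero]
    have hL2 : L 2 = ⊥ := by
      rw [eq_bot_iff]
      intro w hw
      rw [Submodule.mem_bot]
      exact hC 2 (by norm_num) w hw fun y hy => by
        rw [← lie_skew, h2 w hw y hy, neg_zero]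
    have hLj : ∀ j : ℤ, 2 ≤ j → L j = ⊥ := by
      intro j hj
      refine Int.le_induction (motive := fun j _ => L j = ⊥) ?_ ?_ j hj
      · exact hL2
      · intro n hn IH
        rw [hgen n (by omega), IH, eq_bot_iff]
        refine bSpan_le fun u hu v hv => ?_
        rw [Submodule.mem_bot] at hu
        rw [hu, zero_lie]
        exact Submodule.zero_mem _
    -- the degree-0 part of the ideal : `T = [L₋₁, L 1] ⊆ Ann`
    set T : Submodule F A := bSpan (L (-1)) (L 1) with hTdef
    have hT0 : T ≤ L 0 := bSpan_le fun y hy u hu => by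
      simpa using hgrade (-1) 1 y hy u hu
    have hTA : T ≤ Ann := bSpan_le hTAnn
    have hLiS : ∀ i : ℤ, i ≠ 0 → L i ≤ S.toSubmodule := fun i hi => (hSi i hi) ▸ inf_le_left
    -- the negative part
    set Neg : Submodule F A := ⨆ j : {j : ℤ // j ≤ -1}, L j.1 with hNegdef
    have hNegmem : ∀ j : ℤ, j ≤ -1 → L j ≤ Neg := fun j hj =>
      le_iSup (fun k : {j : ℤ // j ≤ -1} => L k.1) ⟨j, hj⟩
    have hNegS : Neg ≤ S.toSubmodule := iSup_le fun j => hLiS j.1 (by have := j.2; omega)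
    set N : Submodule F A := T ⊔ Neg with hNdef
    have hTS : T ≤ S.toSubmodule := bSpan_le fun y hy u hu =>
      S.lie_mem (hLiS (-1) (by norm_num) hy) (hLiS 1 one_ne_zero hu)
    have hNS : N ≤ S.toSubmodule := sup_le hTS hNegS
    -- `[L 0, T] ⊆ T`
    have key0 : ∀ s ∈ L 0, ∀ t ∈ T, ⁅s, t⁆ ∈ T := by
      intro s hs t ht
      refine bSpan_induction (C := fun t => ⁅s, t⁆ ∈ T) ht (fun y hy u hu => ?_)
        (by show ⁅s, (0 : A)⁆ ∈ T; rw [lie_zero]; exact T.zero_mem)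
        (fun a b hca hcb => by show ⁅s, a + b⁆ ∈ T; rw [lie_add]; exact T.add_mem hca hcb)
        (fun c a hca => by show ⁅s, c • a⁆ ∈ T; rw [lie_smul]; exact T.smul_mem c hca)
      show ⁅s, ⁅y, u⁆⁆ ∈ T
      rw [leibniz_lie]
      exact T.add_mem (lie_mem_bSpan (by simpa using hgrade 0 (-1) s hs y hy) hu)
        (lie_mem_bSpan hy (by simpa using hgrade 0 1 s hs u hu))
    -- `N` is closed under bracketing with `S`
    have homog : ∀ i : ℤ, ∀ s ∈ S.toSubmodule ⊓ L i, ∀ n ∈ N, ⁅s, n⁆ ∈ N := by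
      intro i s hs n hn
      obtain ⟨hsS, hsL⟩ := hs
      by_cases h2i : 2 ≤ i
      · have : s = 0 := by
          have := hLj i h2i ▸ hsL
          simpa using this
        rw [this, zero_lie]; exact N.zero_mem
      rcases Submodule.mem_sup.mp hn with ⟨t, ht, m, hm, rfl⟩
      rw [lie_add]
      refine N.add_mem ?_ ?_
      · -- bracket with the `T`-part
        rcases lt_trichotomy i 0 with hi | hi | hi
        · have hmem : ⁅s, t⁆ ∈ L i := by simpa using hgrade i 0 s hsL t (hT0 ht)
          exact Submodule.mem_sup_right (hNegmem i (by omega) hmem)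
        · subst hi
          exact Submodule.mem_sup_left (key0 s hsL t ht)
        · have hi1 : i = 1 := by omega
          subst hi1
          rw [← lie_skew, hAnn1 t (hTA ht) s hsL, neg_zero]
          exact N.zero_mem
      · -- bracket with the `Neg`-part
        refine Submodule.iSup_induction (motive := fun m => ⁅s, m⁆ ∈ N) _ hm (fun j x hx => ?_)
          (by show ⁅s, (0 : A)⁆ ∈ N; rw [lie_zero]; exact N.zero_mem)
          (fun a b hca hcb => by show ⁅s, a + b⁆ ∈ N; rw [lie_add]; exact N.add_mem hca hcb)
        show ⁅s, x⁆ ∈ N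
        obtain ⟨j, hj⟩ := j
        have hmem : ⁅s, x⁆ ∈ L (i + j) := hgrade i j s hsL x hx
        rcases lt_trichotomy (i + j) 0 with hij | hij | hij
        · exact Submodule.mem_sup_right (hNegmem (i + j) (by omega) hmem)
        · have hi1 : i = 1 ∧ j = -1 := by omega
          obtain ⟨rfl, rfl⟩ := hi1
          rw [← lie_skew]
          exact N.neg_mem (Submodule.mem_sup_left (lie_mem_bSpan hx hsL))
        · omega
    have hNcl : ∀ s ∈ S.toSubmodule, ∀ n ∈ N, ⁅s, n⁆ ∈ N := by
      intro s hs n hn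
      rw [hSgraded] at hs
      exact Submodule.iSup_induction (motive := fun s => ⁅s, n⁆ ∈ N) _ hs
        (fun i x hx => homog i x hx n hn)
        (by show ⁅(0 : A), n⁆ ∈ N; rw [zero_lie]; exact N.zero_mem)
        (fun a b hca hcb => by show ⁅a + b, n⁆ ∈ N; rw [add_lie]; exact N.add_mem hca hcb)
    -- build the corresponding ideal of `S`
    let I : LieIdeal F S :=
      { carrier := {x : S | (x : A) ∈ N}
        add_mem' := by
          intro a b ha hb
          show ((a : A) + (b : A)) ∈ N
          exact N.add_mem ha hb
        zero_mem' := by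
          show ((0 : A)) ∈ N
          exact N.zero_mem
        smul_mem' := by
          intro c a ha
          show (c • (a : A)) ∈ N
          exact N.smul_mem c ha
        lie_mem := by
          intro x m hm
          show ((⁅x, m⁆ : S) : A) ∈ N
          rw [LieSubalgebra.coe_bracket]
          exact hNcl x x.2 m hm }
    have hImem : ∀ x : S, x ∈ I ↔ (x : A) ∈ N := fun x => Iff.rfl
    rcases hSsimple.eq_bot_or_eq_top I with hIbot | hItop
    · -- `I = ⊥` contradicts `L₋q ≠ 0`
      obtain ⟨v, hv, hvne⟩ := (Submodule.ne_bot_iff _).mp hbot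
      have hvN : v ∈ N := Submodule.mem_sup_right (hNegmem (-q) (by omega) hv)
      have hvI : (⟨v, hNS hvN⟩ : S) ∈ I := (hImem _).mpr hvN
      rw [hIbot] at hvI
      rw [LieSubmodule.mem_bot] at hvI
      exact hvne (congrArg Subtype.val hvI)
    · -- `I = ⊤` contradicts `L 1 ≠ 0`
      obtain ⟨u, hu, hune⟩ := (Submodule.ne_bot_iff _).mp hL1
      have huS : u ∈ S.toSubmodule := hLiS 1 one_ne_zero hu
      have huI : (⟨u, huS⟩ : S) ∈ I := by rw [hItop]; trivial
      have huN : u ∈ N := (hImem _).mp huI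
      have hNle : N ≤ ⨆ (j : ℤ) (_ : j ≠ 1), L j := by
        refine sup_le (le_trans hT0 ?_) (iSup_le fun j => ?_)
        · exact le_iSup_of_le 0 (le_iSup_of_le (by norm_num) le_rfl)
        · exact le_iSup_of_le j.1 (le_iSup_of_le (by have := j.2; omega) le_rfl)
      have hdisj := hdecomp.submodule_iSupIndep 1
      exact hune (Submodule.disjoint_def.mp hdisj u hu (hNle huN))

end GradedLie
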